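/- Let U ⊆ ℝ × ℝ³ be open and let u : U → ℝ³ be twice continuously differentiable. Set ω = curl u (the spatial curl) and u̇ = ∂_t u + (u·∇)u. Then at every point of U: ∂_t ω = curl u̇ − (u·∇)ω − ∑_{i=1}^{3} ∇u^i × ∂_i u, where ∇u^i is the spatial gradient of the i-th component of u, ∂_i u is the i-th spatial partial derivative of u, and × is the cross product in ℝ³. -/

import Mathlib

noncomputable section

/-- ℝ³, realized as `Fin 3 → ℝ`. -/
abbrev V3 : Type := Fin 3 → ℝ

/-- Spatial partial derivative `∂ᵢ f (t, x)` of a time-dependent scalar field. -/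
def spd (i : Fin 3) (f : ℝ × V3 → ℝ) (t : ℝ) (x : V3) : ℝ :=
  fderiv ℝ (fun y => f (t, y)) x (Pi.single i 1)

/-- Spatial gradient `∇f (t, x)` of a time-dependent scalar field. -/
def spgrad (f : ℝ × V3 → ℝ) (t : ℝ) (x : V3) : V3 := fun i => spd i f t x

/-- Spatial partial derivative `∂ᵢ v (t, x)` of a time-dependent vector field. -/
def spdv (i : Fin 3) (v : ℝ × V3 → V3) (t : ℝ) (x : V3) : V3 :=
  fderiv ℝ (fun y => v (t, y)) x (Pi.single i 1)

/-- Spatial divergence `div v (t, x)` of a time-dependent vector field. -/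
def spdiv (v : ℝ × V3 → V3) (t : ℝ) (x : V3) : ℝ := ∑ i, spdv i v t x i

/-- Spatial curl `curl v (t, x)` of a time-dependent vector field (0-based indices). -/
def spcurl (v : ℝ × V3 → V3) (t : ℝ) (x : V3) : V3 :=
  ![spdv 1 v t x 2 - spdv 2 v t x 1,
    spdv 2 v t x 0 - spdv 0 v t x 2,
    spdv 0 v t x 1 - spdv 1 v t x 0]

/-- Time derivative `∂ₜ f (t, x)` of a time-dependent scalar field. -/
def pdt (f : ℝ × V3 → ℝ) (t : ℝ) (x : V3) : ℝ := deriv (fun s => f (s, x)) t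

/-- Time derivative `∂ₜ v (t, x)` of a time-dependent vector field. -/
def pdtv (v : ℝ × V3 → V3) (t : ℝ) (x : V3) : V3 := deriv (fun s => v (s, x)) t

/-- Cross product in ℝ³. -/
def cross3 (a b : V3) : V3 :=
  ![a 1 * b 2 - a 2 * b 1, a 2 * b 0 - a 0 * b 2, a 0 * b 1 - a 1 * b 0]


open Filter Topology in
/-- The vorticity equation: for a twice continuously differentiable velocity field `u`,
with `ω = curl u` and `u̇ = ∂ₜu + (u·∇)u`, at every point of `U`:
`∂ₜω = curl u̇ − (u·∇)ω − ∑ᵢ ∇uⁱ × ∂ᵢu`. -/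
theorem vorticity_time_derivative
    (U : Set (ℝ × V3)) (hU : IsOpen U)
    (u : ℝ × V3 → V3) (hu : ContDiffOn ℝ 2 u U) :
    ∀ p ∈ U,
      pdtv (fun q => spcurl u q.1 q.2) p.1 p.2
        = spcurl
            (fun q => pdtv u q.1 q.2 + fderiv ℝ (fun y => u (q.1, y)) q.2 (u q)) p.1 p.2
          - fderiv ℝ (fun y => spcurl u p.1 y) p.2 (u p)
          - ∑ i, cross3 (fun j => spdv j u p.1 p.2 i) (spdv i u p.1 p.2) := by
  rintro ⟨t, x⟩ hp
  dsimp only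
  have hUmem : U ∈ 𝓝 (t, x) := hU.mem_nhds hp
  have hdAll : ∀ q ∈ U, DifferentiableAt ℝ u q := fun q hq =>
    (hu.differentiableOn two_ne_zero).differentiableAt (hU.mem_nhds hq)
  have hdiff : ∀ᶠ q in 𝓝 (t, x), DifferentiableAt ℝ u q :=
    Filter.eventually_of_mem hUmem hdAll
  have hcd : ContDiffAt ℝ 2 u (t, x) := hu.contDiffAt hUmem
  have hgd : DifferentiableAt ℝ (fderiv ℝ u) (t, x) :=
    ((hcd.fderiv_right (m := 1) (by norm_num)).differentiableAt one_ne_zero)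
  set G : (ℝ × V3) →L[ℝ] V3 := fderiv ℝ u (t, x) with hG
  set H : (ℝ × V3) →L[ℝ] (ℝ × V3) →L[ℝ] V3 := fderiv ℝ (fderiv ℝ u) (t, x) with hH
  have hsymm : ∀ v w, H v w = H w v := fun v w =>
    second_derivative_symmetric_of_eventually
      (hdiff.mono fun q hq => hq.hasFDerivAt) hgd.hasFDerivAt v w
  set e : Fin 3 → ℝ × V3 := fun i => ((0 : ℝ), Pi.single i 1) with he
  set τ : ℝ × V3 := (1, 0) with hτ
  set up : V3 := u (t, x) with hup
  have slice_x : ∀ (t' : ℝ) (x' : V3), DifferentiableAt ℝ u (t', x') →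
      HasFDerivAt (fun y => u (t', y))
        ((fderiv ℝ u (t', x')).comp (ContinuousLinearMap.inr ℝ ℝ V3)) x' := fun t' x' hq =>
    hq.hasFDerivAt.comp x' (hasFDerivAt_prodMk_right t' x')
  have spdv_eq : ∀ (t' : ℝ) (x' : V3), DifferentiableAt ℝ u (t', x') → ∀ i,
      spdv i u t' x' = fderiv ℝ u (t', x') (e i) := by
    intro t' x' hq i
    rw [spdv, (slice_x t' x' hq).fderiv]
    simp [he]
  have hcurve : HasDerivAt (fun s : ℝ => (s, x)) τ t := by
    simpa [hτ] using (hasDerivAt_id t).prodMk (hasDerivAt_const t x)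
  have hgt : HasDerivAt (fun s => fderiv ℝ u (s, x)) (H τ) t :=
    hgd.hasFDerivAt.comp_hasDerivAt t hcurve
  have hgx : HasFDerivAt (fun y => fderiv ℝ u (t, y))
      (H.comp (ContinuousLinearMap.inr ℝ ℝ V3)) x :=
    hgd.hasFDerivAt.comp x (hasFDerivAt_prodMk_right t x)
  have hux : HasFDerivAt (fun y => u (t, y))
      (G.comp (ContinuousLinearMap.inr ℝ ℝ V3)) x :=
    slice_x t x (hdAll _ hp)
  have hev_t : ∀ᶠ s in 𝓝 t, DifferentiableAt ℝ u (s, x) :=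
    ((continuous_id.prodMk continuous_const).tendsto t).eventually hdiff
  have hev_x : ∀ᶠ y in 𝓝 x, DifferentiableAt ℝ u (t, y) :=
    ((continuous_const.prodMk continuous_id).tendsto x).eventually hdiff
  -- LHS
  have hLHS : pdtv (fun q => spcurl u q.1 q.2) t x
      = ![H τ (e 1) 2 - H τ (e 2) 1, H τ (e 2) 0 - H τ (e 0) 2,
          H τ (e 0) 1 - H τ (e 1) 0] := by
    have heq : (fun s => spcurl u s x)
        =ᶠ[𝓝 t] fun s => ![fderiv ℝ u (s, x) (e 1) 2 - fderiv ℝ u (s, x) (e 2) 1,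
            fderiv ℝ u (s, x) (e 2) 0 - fderiv ℝ u (s, x) (e 0) 2,
            fderiv ℝ u (s, x) (e 0) 1 - fderiv ℝ u (s, x) (e 1) 0] := by
      filter_upwards [hev_t] with s hs
      simp only [spcurl, spdv_eq s x hs]
    rw [pdtv, heq.deriv_eq]
    refine HasDerivAt.deriv ?_
    have comp : ∀ v : ℝ × V3, HasDerivAt (fun s => fderiv ℝ u (s, x) v) (H τ v) t := by
      intro v
      simpa using hgt.clm_apply (hasDerivAt_const t v)
    apply hasDerivAt_pi.mpr
    intro j
    fin_cases j
    · simpa [Pi.sub_def] using (hasDerivAt_pi.mp (comp (e 1)) 2).sub (hasDerivAt_pi.mp (comp (e 2)) 1)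
    · simpa [Pi.sub_def] using (hasDerivAt_pi.mp (comp (e 2)) 0).sub (hasDerivAt_pi.mp (comp (e 0)) 2)
    · simpa [Pi.sub_def] using (hasDerivAt_pi.mp (comp (e 0)) 1).sub (hasDerivAt_pi.mp (comp (e 1)) 0)
  -- udot
  set udot : ℝ × V3 → V3 :=
    fun q => pdtv u q.1 q.2 + fderiv ℝ (fun y => u (q.1, y)) q.2 (u q) with hudot
  have udot_eq : ∀ (t' : ℝ) (y : V3), DifferentiableAt ℝ u (t', y) →
      udot (t', y) = fderiv ℝ u (t', y) ((1 : ℝ), u (t', y)) := by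
    intro t' y hq
    have h1 : pdtv u t' y = fderiv ℝ u (t', y) ((1 : ℝ), (0 : V3)) := by
      rw [pdtv]
      refine HasDerivAt.deriv ?_
      have hc : HasDerivAt (fun s : ℝ => (s, y)) ((1 : ℝ), (0 : V3)) t' := by
        simpa using (hasDerivAt_id t').prodMk (hasDerivAt_const t' y)
      exact hq.hasFDerivAt.comp_hasDerivAt t' hc
    have h2 : fderiv ℝ (fun z => u (t', z)) y (u (t', y))
        = fderiv ℝ u (t', y) ((0 : ℝ), u (t', y)) := by
      rw [(slice_x t' y hq).fderiv]; simp
    simp only [hudot, h1, h2, ← ContinuousLinearMap.map_add, Prod.mk_add_mk, add_zero, zero_add]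
  have hAspdv : ∀ a : Fin 3, spdv a udot t x
      = G ((0 : ℝ), G (e a)) + H (e a) ((1 : ℝ), up) := by
    intro a
    have heq : (fun y => udot (t, y)) =ᶠ[𝓝 x]
        fun y => fderiv ℝ u (t, y) ((1 : ℝ), u (t, y)) := by
      filter_upwards [hev_x] with y hy
      exact udot_eq t y hy
    have h1 : HasFDerivAt (fun y => ((1 : ℝ), u (t, y)))
        ((0 : V3 →L[ℝ] ℝ).prod (G.comp (ContinuousLinearMap.inr ℝ ℝ V3))) x :=
      (hasFDerivAt_const (1 : ℝ) x).prodMk hux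
    have h2 := hgx.clm_apply h1
    rw [spdv, heq.fderiv_eq, h2.fderiv]
    simp [he, hup, ← hG]
  -- B piece
  have hcomp : ∀ v : ℝ × V3, HasFDerivAt (fun y => fderiv ℝ u (t, y) v)
      ((H.comp (ContinuousLinearMap.inr ℝ ℝ V3)).flip v) x := by
    intro v
    simpa using hgx.clm_apply (hasFDerivAt_const v x)
  have hBF : ∀ a b c d : Fin 3, HasFDerivAt (fun y => spdv a u t y b - spdv c u t y d)
      ((ContinuousLinearMap.proj b).comp
          ((H.comp (ContinuousLinearMap.inr ℝ ℝ V3)).flip (e a))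
        - (ContinuousLinearMap.proj d).comp
          ((H.comp (ContinuousLinearMap.inr ℝ ℝ V3)).flip (e c))) x := by
    intro a b c d
    refine HasFDerivAt.congr_of_eventuallyEq
      ((hasFDerivAt_pi'.mp (hcomp (e a)) b).sub (hasFDerivAt_pi'.mp (hcomp (e c)) d)) ?_
    filter_upwards [hev_x] with y hy
    rw [spdv_eq t y hy, spdv_eq t y hy]
    rfl
  have hdF : DifferentiableAt ℝ (fun y => spcurl u t y) x := by
    apply differentiableAt_pi''
    intro j
    fin_cases j
    · exact (hBF 1 2 2 1).differentiableAt
    · exact (hBF 2 0 0 2).differentiableAt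
    · exact (hBF 0 1 1 0).differentiableAt
  have hproj : ∀ j : Fin 3, fderiv ℝ (fun y => spcurl u t y) x up j
      = fderiv ℝ (fun y => spcurl u t y j) x up := by
    intro j
    rw [(hasFDerivAt_pi'.mp hdF.hasFDerivAt j).fderiv]
    simp
  have hBgen : ∀ (j a b c d : Fin 3),
      (fun y => spcurl u t y j) = (fun y => spdv a u t y b - spdv c u t y d) →
      fderiv ℝ (fun y => spcurl u t y) x up j
        = H ((0:ℝ), up) (e a) b - H ((0:ℝ), up) (e c) d := by
    intro j a b c d hj
    rw [hproj j, hj, (hBF a b c d).fderiv]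
    simp [he]
  have hB0 := hBgen 0 1 2 2 1 (by funext y; simp [spcurl])
  have hB1 := hBgen 1 2 0 0 2 (by funext y; simp [spcurl])
  have hB2 := hBgen 2 0 1 1 0 (by funext y; simp [spcurl])
  have hdp : DifferentiableAt ℝ u (t, x) := hdAll _ hp
  have hC : ∀ i, spdv i u t x = G (e i) := spdv_eq t x hdp
  have h1up : ((1:ℝ), up) = τ + ((0:ℝ), up) := by
    rw [hτ, Prod.mk_add_mk, add_zero, zero_add]
  have hsplitc : ∀ (a b : Fin 3),
      H (e a) ((1:ℝ), up) b = H τ (e a) b + H (e a) ((0:ℝ), up) b := by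
    intro a b
    rw [h1up, ContinuousLinearMap.map_add, Pi.add_apply, hsymm (e a) τ]
  have hsym2c : ∀ (a b : Fin 3), H ((0:ℝ), up) (e a) b = H (e a) ((0:ℝ), up) b :=
    fun a b => congrFun (hsymm _ _) b
  have hdecomp : ∀ v : V3, ((0:ℝ), v) = v 0 • e 0 + v 1 • e 1 + v 2 • e 2 := by
    intro v
    rw [Prod.ext_iff]
    constructor
    · simp [he]
    · funext j
      fin_cases j <;> simp [he, Pi.single_apply, Fin.ext_iff]
  have hGGc : ∀ (a b : Fin 3), G ((0:ℝ), G (e a)) b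
      = G (e a) 0 * G (e 0) b + G (e a) 1 * G (e 1) b + G (e a) 2 * G (e 2) b := by
    intro a b
    rw [hdecomp (G (e a)), map_add, map_add, map_smul, map_smul, map_smul]
    simp
  have hBvec : fderiv ℝ (fun y => spcurl u t y) x up
      = ![H ((0:ℝ), up) (e 1) 2 - H ((0:ℝ), up) (e 2) 1,
          H ((0:ℝ), up) (e 2) 0 - H ((0:ℝ), up) (e 0) 2,
          H ((0:ℝ), up) (e 0) 1 - H ((0:ℝ), up) (e 1) 0] := by
    funext j
    fin_cases j
    · exact hB0
    · exact hB1
    · exact hB2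
  have hCvec : (∑ i, cross3 (fun j => spdv j u t x i) (spdv i u t x))
      = cross3 (fun j => G (e j) 0) (G (e 0)) + cross3 (fun j => G (e j) 1) (G (e 1))
        + cross3 (fun j => G (e j) 2) (G (e 2)) := by
    rw [Fin.sum_univ_three]
    simp only [hC]
  -- final assembly
  rw [hLHS, hBvec, hCvec]
  simp only [spcurl, hAspdv, cross3]
  simp only [Matrix.cons_sub, Matrix.sub_cons, Matrix.cons_add, Matrix.add_cons,
    Matrix.head_cons, Matrix.tail_cons, Matrix.empty_sub_empty, Matrix.empty_add_empty]
  refine congrArg₂ Matrix.vecCons ?_ (congrArg₂ Matrix.vecCons ?_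
    (congrArg₂ Matrix.vecCons ?_ rfl)) <;>
  · simp only [Pi.add_apply, hGGc, hsplitc, hsym2c]
    ring

end
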